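/- Under the stated hypotheses, for every x ∈ [α, min{β, α + η0²/M}] one has h'(x) ≥ η0 and h(x) ≥ η0(x − α). -/

import Mathlib

open MeasureTheory Set

/-- Let `η0 > 0`, `M > 0`, `α < β`, and let `h` be `C¹` on `[α,β]` with `h α = 0` and
`h' α ≥ 2η0`, where `h'` is absolutely continuous with derivative `h''` satisfying
`∫_α^β |h''|² ≤ M`.  Then for every `x ∈ [α, min{β, α + η0²/M}]` one has
`h' x ≥ η0` and `h x ≥ η0 (x - α)`. -/
theorem stmt_3 (η0 M α β : ℝ) (hη0 : 0 < η0) (hM : 0 < M) (hαβ : α < β)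
    (h h' h'' : ℝ → ℝ)
    (hderiv : ∀ x ∈ Set.Icc α β, HasDerivWithinAt h (h' x) (Set.Icc α β) x)
    (hcont : ContinuousOn h' (Set.Icc α β))
    (hhα : h α = 0)
    (h'α : 2 * η0 ≤ h' α)
    (hAC : ∀ x ∈ Set.Icc α β, h' x = h' α + ∫ s in α..x, h'' s)
    (hint : IntervalIntegrable h'' volume α β)
    (hintsq : IntervalIntegrable (fun x => |h'' x| ^ 2) volume α β)
    (hL2 : (∫ x in α..β, |h'' x| ^ 2) ≤ M) :
    ∀ x ∈ Set.Icc α (min β (α + η0 ^ 2 / M)),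
      η0 ≤ h' x ∧ η0 * (x - α) ≤ h x := by
  -- first establish the derivative bound for every point of the interval
  have key : ∀ x ∈ Set.Icc α (min β (α + η0 ^ 2 / M)), η0 ≤ h' x := by
    intro x hx
    obtain ⟨hx1, hx2'⟩ := hx
    have hx2 : x ≤ β := hx2'.trans (min_le_left _ _)
    have hx3 : x - α ≤ η0 ^ 2 / M := by
      have := hx2'.trans (min_le_right _ _); linarith
    have hIx : x ∈ Set.Icc α β := ⟨hx1, hx2⟩
    have hsub : Set.uIcc α x ⊆ Set.uIcc α β := by
      rw [Set.uIcc_of_le hx1, Set.uIcc_of_le hαβ.le]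
      exact Set.Icc_subset_Icc le_rfl hx2
    have hint' : IntervalIntegrable h'' volume α x := hint.mono_set hsub
    have hintsq' : IntervalIntegrable (fun s => |h'' s| ^ 2) volume α x :=
      hintsq.mono_set hsub
    -- the tail integral of |h''|² on [α,x] is at most M
    have hsq_le : (∫ s in α..x, |h'' s| ^ 2) ≤ M := by
      refine le_trans ?_ hL2
      apply intervalIntegral.integral_mono_interval le_rfl hx1 hx2 ?_ hintsq
      filter_upwards with s
      positivity
    -- pointwise Young-type inequality
    have hpt : ∀ s ∈ Set.Icc α x, |h'' s| ≤ M / η0 / 2 + η0 / (2 * M) * |h'' s| ^ 2 := by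
      intro s _
      have hpos : (0:ℝ) < 2 * η0 * M := by positivity
      calc |h'' s| ≤ (M ^ 2 + η0 ^ 2 * |h'' s| ^ 2) / (2 * η0 * M) := by
            rw [le_div_iff₀ hpos]
            nlinarith [sq_nonneg (M - η0 * |h'' s|)]
        _ = M / η0 / 2 + η0 / (2 * M) * |h'' s| ^ 2 := by field_simp
    have habs : |∫ s in α..x, h'' s| ≤ η0 := by
      calc |∫ s in α..x, h'' s| ≤ ∫ s in α..x, |h'' s| :=
            intervalIntegral.abs_integral_le_integral_abs hx1
        _ ≤ ∫ s in α..x, (M / η0 / 2 + η0 / (2 * M) * |h'' s| ^ 2) := by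
            apply intervalIntegral.integral_mono_on hx1 hint'.abs
              (by exact (intervalIntegrable_const).add (hintsq'.const_mul _)) hpt
        _ = (M / η0 / 2) * (x - α) + η0 / (2 * M) * ∫ s in α..x, |h'' s| ^ 2 := by
            rw [intervalIntegral.integral_add (intervalIntegrable_const)
              (hintsq'.const_mul _), intervalIntegral.integral_const_mul,
              intervalIntegral.integral_const, smul_eq_mul, mul_comm]
        _ ≤ (M / η0 / 2) * (η0 ^ 2 / M) + η0 / (2 * M) * M := by
            gcongr
        _ = η0 := by field_simp; ring
    have := hAC x hIx
    have habs' := abs_le.mp habs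
    linarith [habs'.1]
  intro x hx
  refine ⟨key x hx, ?_⟩
  obtain ⟨hx1, hx2'⟩ := hx
  have hx2 : x ≤ β := hx2'.trans (min_le_left _ _)
  -- FTC on [α, x]
  have hcontOn : ContinuousOn h (Set.Icc α x) := fun y hy =>
    ((hderiv y ⟨hy.1, hy.2.trans hx2⟩).continuousWithinAt).mono
      (Set.Icc_subset_Icc le_rfl hx2)
  have hderiv' : ∀ y ∈ Set.Ioo α x, HasDerivWithinAt h (h' y) (Set.Ioi y) y := by
    intro y hy
    have hyβ : y < β := hy.2.trans_le hx2
    have hmem : Set.Icc α β ∈ nhdsWithin y (Set.Ioi y) := by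
      apply mem_nhdsWithin.mpr
      exact ⟨Set.Iio β, isOpen_Iio, hyβ, fun z hz => ⟨hy.1.le.trans hz.2.le, hz.1.le⟩⟩
    exact (hderiv y ⟨hy.1.le, hyβ.le⟩).mono_of_mem_nhdsWithin hmem
  have h'int : IntervalIntegrable h' volume α x := by
    apply ContinuousOn.intervalIntegrable
    rw [Set.uIcc_of_le hx1]
    exact hcont.mono (Set.Icc_subset_Icc le_rfl hx2)
  have hFTC := intervalIntegral.integral_eq_sub_of_hasDeriv_right_of_le hx1
    hcontOn hderiv' h'int
  have hmono : η0 * (x - α) ≤ ∫ y in α..x, h' y := by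
    have : (∫ y in α..x, (η0 : ℝ)) ≤ ∫ y in α..x, h' y := by
      apply intervalIntegral.integral_mono_on hx1 intervalIntegrable_const h'int
      intro y hy
      exact key y ⟨hy.1, le_trans hy.2 hx2'⟩
    simpa [smul_eq_mul, mul_comm] using this
  rw [hFTC, hhα, sub_zero] at hmono
  exact hmono
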